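/- Propriety (but not strict propriety) of the Gaussian copula score at the matrix level: Let R_Q be a d×d symmetric positive-definite matrix and let U be a random vector in ℝ^d with mean vector 0 and covariance matrix R_Q. Then for any d×d symmetric positive-definite matrix R_C, E[ (1/2) log det R_C + (1/2) Uᵀ (R_C^{-1} − I_d) U ] = (1/2)( log(det R_C / det R_Q) − d + Tr(R_C^{-1} R_Q) ) + (1/2) log det R_Q + d/2 − (1/2) Tr(R_Q), where the first summand is nonnegative and equals 0 if and only if R_C = R_Q; hence the expectation is minimized over symmetric positive-definite R_C exactly when R_C = R_Q. -/

import Mathlib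

open MeasureTheory Matrix

lemma myPosDefConj {d : ℕ} {A B : Matrix (Fin d) (Fin d) ℝ} (hA : A.PosDef)
    (hB : IsUnit B.det) : (Bᴴ * A * B).PosDef := by
  refine PosDef.of_dotProduct_mulVec_pos (isHermitian_conjTranspose_mul_mul B hA.1) fun x hx => ?_
  have hBx : B *ᵥ x ≠ 0 := by
    intro h
    apply hx
    have := congrArg (fun v => B⁻¹ *ᵥ v) h
    simpa [Matrix.mulVec_mulVec, Matrix.nonsing_inv_mul B hB] using this
  simpa only [star_mulVec, dotProduct_mulVec, vecMul_vecMul] using hA.dotProduct_mulVec_pos hBx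

lemma myTraceEig {d : ℕ} {M : Matrix (Fin d) (Fin d) ℝ} (hM : M.IsHermitian) :
    M.trace = ∑ i, hM.eigenvalues i := by
  simpa using hM.trace_eq_sum_eigenvalues

lemma myTraceLogDet {d : ℕ} {M : Matrix (Fin d) (Fin d) ℝ} (hM : M.PosDef) :
    0 ≤ M.trace - Real.log M.det - d ∧ (M.trace - Real.log M.det - d = 0 ↔ M = 1) := by
  have hH := hM.isHermitian
  have hev : ∀ i, 0 < hH.eigenvalues i := hM.eigenvalues_pos
  have hdet : M.det = ∏ i, hH.eigenvalues i := by
    simpa using hH.det_eq_prod_eigenvalues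
  have hlog : Real.log M.det = ∑ i, Real.log (hH.eigenvalues i) := by
    rw [hdet, Real.log_prod (fun i _ => (hev i).ne')]
  have htr := myTraceEig hH
  have hexpr : M.trace - Real.log M.det - d
      = ∑ i, (hH.eigenvalues i - Real.log (hH.eigenvalues i) - 1) := by
    rw [htr, hlog]
    simp [Finset.sum_sub_distrib]
  have hterm : ∀ i, 0 ≤ hH.eigenvalues i - Real.log (hH.eigenvalues i) - 1 := fun i => by
    have := Real.log_le_sub_one_of_pos (hev i)
    linarith
  constructor
  · rw [hexpr]
    exact Finset.sum_nonneg fun i _ => hterm i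
  constructor
  · intro h0
    rw [hexpr] at h0
    have hall : ∀ i ∈ Finset.univ, hH.eigenvalues i - Real.log (hH.eigenvalues i) - 1 = 0 :=
      (Finset.sum_eq_zero_iff_of_nonneg (fun i _ => hterm i)).mp h0
    have heig1 : ∀ i, hH.eigenvalues i = 1 := by
      intro i
      by_contra hne
      have := Real.log_lt_sub_one_of_pos (hev i) hne
      have := hall i (Finset.mem_univ i)
      linarith
    have hdiag : Matrix.diagonal (RCLike.ofReal ∘ hH.eigenvalues) = (1 : Matrix (Fin d) (Fin d) ℝ) := by
      have hfun : hH.eigenvalues = fun _ => (1:ℝ) := funext heig1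
      simp [hfun, Function.comp, Matrix.diagonal_one]
    have := hH.spectral_theorem
    rw [hdiag, Unitary.conjStarAlgAut_apply, Matrix.mul_one] at this
    rw [this]
    exact (Matrix.mem_unitaryGroup_iff).mp hH.eigenvectorUnitary.2
  · rintro rfl
    simp [Matrix.trace_one]

open scoped MatrixOrder in
lemma myKL {d : ℕ} {RQ RC : Matrix (Fin d) (Fin d) ℝ} (hRQ : RQ.PosDef) (hRC : RC.PosDef) :
    0 ≤ Real.log (RC.det / RQ.det) - d + (RC⁻¹ * RQ).trace ∧
    (Real.log (RC.det / RQ.det) - d + (RC⁻¹ * RQ).trace = 0 ↔ RC = RQ) := by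
  set S := CFC.sqrt RQ with hSdef
  have hS : S.PosSemidef := Matrix.nonneg_iff_posSemidef.mp (CFC.sqrt_nonneg RQ)
  have hSS : S * S = RQ := CFC.sqrt_mul_sqrt_self RQ hRQ.posSemidef.nonneg
  have hdetRQ : RQ.det ≠ 0 := hRQ.det_pos.ne'
  have hdetRC : RC.det ≠ 0 := hRC.det_pos.ne'
  have hdetS : S.det ≠ 0 := by
    intro h
    apply hdetRQ
    rw [← hSS, Matrix.det_mul, h, mul_zero]
  have hSH : Sᴴ = S := hS.1
  have hM : (S * RC⁻¹ * S).PosDef := by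
    have := myPosDefConj hRC.inv (isUnit_iff_ne_zero.mpr hdetS)
    rwa [hSH] at this
  set M := S * RC⁻¹ * S with hMdef
  have htrM : M.trace = (RC⁻¹ * RQ).trace := by
    rw [hMdef, Matrix.mul_assoc, Matrix.trace_mul_comm, Matrix.mul_assoc, hSS]
  have hdetM : M.det = RQ.det / RC.det := by
    rw [hMdef, Matrix.det_mul, Matrix.det_mul, Matrix.det_nonsing_inv, Ring.inverse_eq_inv']
    field_simp [← hSS, Matrix.det_mul]
    rw [← hSS, Matrix.det_mul, sq]
  have hlogM : Real.log M.det = Real.log RQ.det - Real.log RC.det := by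
    rw [hdetM, Real.log_div hdetRQ hdetRC]
  have hEq : Real.log (RC.det / RQ.det) - d + (RC⁻¹ * RQ).trace
      = M.trace - Real.log M.det - d := by
    rw [htrM, hlogM, Real.log_div hdetRC hdetRQ]
    ring
  obtain ⟨h1, h2⟩ := myTraceLogDet hM
  have hM1 : M = 1 ↔ RC = RQ := by
    constructor
    · intro hm
      have h1' : RC⁻¹ = RQ⁻¹ := by
        calc RC⁻¹ = (S⁻¹ * S) * RC⁻¹ * (S * S⁻¹) := by
              rw [Matrix.nonsing_inv_mul S (isUnit_iff_ne_zero.mpr hdetS),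
                Matrix.mul_nonsing_inv S (isUnit_iff_ne_zero.mpr hdetS), Matrix.one_mul,
                Matrix.mul_one]
          _ = S⁻¹ * (S * RC⁻¹ * S) * S⁻¹ := by simp only [Matrix.mul_assoc]
          _ = S⁻¹ * S⁻¹ := by rw [← hMdef, hm, Matrix.mul_one]
          _ = (S * S)⁻¹ := (Matrix.mul_inv_rev S S).symm
          _ = RQ⁻¹ := by rw [hSS]
      calc RC = RC⁻¹⁻¹ := (Matrix.nonsing_inv_nonsing_inv RC (isUnit_iff_ne_zero.mpr hdetRC)).symm
        _ = RQ⁻¹⁻¹ := by rw [h1']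
        _ = RQ := Matrix.nonsing_inv_nonsing_inv RQ (isUnit_iff_ne_zero.mpr hdetRQ)
    · rintro rfl
      have : M = S * (S⁻¹ * S⁻¹) * S := by rw [hMdef, ← hSS, Matrix.mul_inv_rev]
      rw [this]
      calc S * (S⁻¹ * S⁻¹) * S = (S * S⁻¹) * (S⁻¹ * S) := by simp only [Matrix.mul_assoc]
        _ = 1 := by
            rw [Matrix.mul_nonsing_inv S (isUnit_iff_ne_zero.mpr hdetS),
              Matrix.nonsing_inv_mul S (isUnit_iff_ne_zero.mpr hdetS), Matrix.one_mul]
  constructor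
  · rw [hEq]; exact h1
  · rw [hEq, h2, hM1]

lemma myScore {d : ℕ} {Ω : Type*} [MeasurableSpace Ω]
    (μ : Measure Ω) [IsProbabilityMeasure μ]
    (RQ : Matrix (Fin d) (Fin d) ℝ) (U : Ω → Fin d → ℝ)
    (hU_int2 : ∀ i j, Integrable (fun ω => U ω i * U ω j) μ)
    (hcov : ∀ i j, (∫ ω, U ω i * U ω j ∂μ) = RQ i j)
    (A : Matrix (Fin d) (Fin d) ℝ) (c : ℝ) :
    (∫ ω, c + (1/2 : ℝ) * (U ω ⬝ᵥ (A *ᵥ U ω)) ∂μ)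
      = c + (1/2 : ℝ) * ∑ i, ∑ j, A i j * RQ i j := by
  have hfun : (fun ω => c + (1/2 : ℝ) * (U ω ⬝ᵥ (A *ᵥ U ω)))
      = fun ω => c + (1/2 : ℝ) * ∑ i, ∑ j, A i j * (U ω i * U ω j) := by
    funext ω
    congr 1
    congr 1
    simp only [dotProduct, Matrix.mulVec, Finset.mul_sum]
    exact Finset.sum_congr rfl fun i _ => Finset.sum_congr rfl fun j _ => by ring
  have hInt_inner : ∀ i, Integrable (fun ω => ∑ j, A i j * (U ω i * U ω j)) μ :=
    fun i => integrable_finset_sum _ fun j _ => (hU_int2 i j).const_mul _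
  have hInt : Integrable (fun ω => ∑ i, ∑ j, A i j * (U ω i * U ω j)) μ :=
    integrable_finset_sum _ fun i _ => hInt_inner i
  rw [hfun, integral_add (integrable_const c) (hInt.const_mul _), integral_const,
    probReal_univ, smul_eq_mul, one_mul, integral_const_mul]
  congr 1
  congr 1
  rw [integral_finset_sum _ (fun i _ => hInt_inner i)]
  refine Finset.sum_congr rfl fun i _ => ?_
  rw [integral_finset_sum _ (fun j _ => (hU_int2 i j).const_mul _)]
  refine Finset.sum_congr rfl fun j _ => ?_
  rw [integral_const_mul, hcov i j]


/-- Propriety (but not strict propriety) of the Gaussian copula score at the matrix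
level.  `U` is a random vector in `ℝ^d` with mean `0` and covariance matrix `RQ`
(symmetric positive definite).  For every symmetric positive definite matrix `RC`,
the expected Gaussian copula score decomposes as the Kullback–Leibler divergence
between the centered normals with covariances `RQ` and `RC` plus a term not
depending on `RC`; the KL term is nonnegative and vanishes exactly when `RC = RQ`,
hence the expected score is minimized over positive definite matrices exactly at
`RC = RQ`. -/
theorem gaussian_copula_score_proper
    {d : ℕ} {Ω : Type*} [MeasurableSpace Ω]
    (μ : Measure Ω) [IsProbabilityMeasure μ]
    (RQ : Matrix (Fin d) (Fin d) ℝ) (hRQ : RQ.PosDef)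
    (U : Ω → Fin d → ℝ)
    (hU_meas : Measurable U)
    (hU_int : ∀ i, Integrable (fun ω => U ω i) μ)
    (hU_int2 : ∀ i j, Integrable (fun ω => U ω i * U ω j) μ)
    (hmean : ∀ i, (∫ ω, U ω i ∂μ) = 0)
    (hcov : ∀ i j, (∫ ω, U ω i * U ω j ∂μ) = RQ i j) :
    ∀ RC : Matrix (Fin d) (Fin d) ℝ, RC.PosDef →
      ((∫ ω, ((1 : ℝ) / 2) * Real.log RC.det
            + (1 / 2) * (U ω ⬝ᵥ ((RC⁻¹ - 1) *ᵥ U ω)) ∂μ)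
          = (1 / 2) * (Real.log (RC.det / RQ.det) - (d : ℝ) + (RC⁻¹ * RQ).trace)
            + (1 / 2) * Real.log RQ.det + (d : ℝ) / 2 - (1 / 2) * RQ.trace)
      ∧ (0 ≤ (1 / 2) * (Real.log (RC.det / RQ.det) - (d : ℝ) + (RC⁻¹ * RQ).trace))
      ∧ ((1 / 2) * (Real.log (RC.det / RQ.det) - (d : ℝ) + (RC⁻¹ * RQ).trace) = 0
          ↔ RC = RQ)
      ∧ ((∫ ω, ((1 : ℝ) / 2) * Real.log RQ.det
            + (1 / 2) * (U ω ⬝ᵥ ((RQ⁻¹ - 1) *ᵥ U ω)) ∂μ)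
          ≤ ∫ ω, ((1 : ℝ) / 2) * Real.log RC.det
            + (1 / 2) * (U ω ⬝ᵥ ((RC⁻¹ - 1) *ᵥ U ω)) ∂μ)
      ∧ ((∫ ω, ((1 : ℝ) / 2) * Real.log RC.det
            + (1 / 2) * (U ω ⬝ᵥ ((RC⁻¹ - 1) *ᵥ U ω)) ∂μ)
          = (∫ ω, ((1 : ℝ) / 2) * Real.log RQ.det
            + (1 / 2) * (U ω ⬝ᵥ ((RQ⁻¹ - 1) *ᵥ U ω)) ∂μ)
          ↔ RC = RQ) := by
  intro RC hRC
  have hsum : ∀ B : Matrix (Fin d) (Fin d) ℝ,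
      ∑ i, ∑ j, B i j * RQ i j = (B * RQ).trace := by
    intro B
    rw [Matrix.trace]
    simp only [Matrix.diag, Matrix.mul_apply]
    refine Finset.sum_congr rfl fun i _ => Finset.sum_congr rfl fun j _ => ?_
    have hsymm : RQ j i = RQ i j := by
      have := congrFun (congrFun hRQ.1 j) i
      simpa [Matrix.conjTranspose_apply] using this.symm
    rw [hsymm]
  have score : ∀ (A : Matrix (Fin d) (Fin d) ℝ),
      (∫ ω, ((1:ℝ)/2) * Real.log A.det + (1/2) * (U ω ⬝ᵥ ((A⁻¹ - 1) *ᵥ U ω)) ∂μ)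
        = (1/2) * Real.log A.det + (1/2) * ((A⁻¹ * RQ).trace - RQ.trace) := by
    intro A
    rw [myScore μ RQ U hU_int2 hcov (A⁻¹ - 1) ((1:ℝ)/2 * Real.log A.det)]
    congr 1
    rw [hsum, Matrix.sub_mul, Matrix.trace_sub, Matrix.one_mul]
  have hdetRQ := hRQ.det_pos
  have hdetRC := hRC.det_pos
  have hKL := myKL hRQ hRC
  have htrid : (RQ⁻¹ * RQ).trace = (d:ℝ) := by
    rw [Matrix.nonsing_inv_mul RQ (isUnit_iff_ne_zero.mpr hdetRQ.ne'), Matrix.trace_one]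
    simp
  have hERC := score RC
  have hERQ := score RQ
  have hlogdiv : Real.log (RC.det / RQ.det) = Real.log RC.det - Real.log RQ.det :=
    Real.log_div hdetRC.ne' hdetRQ.ne'
  refine ⟨?_, ?_, ?_, ?_, ?_⟩
  · rw [hERC, hlogdiv]; ring
  · linarith [hKL.1]
  · constructor
    · intro h; exact hKL.2.mp (by linarith)
    · intro h; have := hKL.2.mpr h; linarith
  · rw [hERC, hERQ, htrid]; linarith [hKL.1]
  · rw [hERC, hERQ, htrid]
    constructor
    · intro h
      exact hKL.2.mp (by rw [hlogdiv]; linarith)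
    · intro h
      rw [h, htrid]
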